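/- If σ : I^{n+1} → G satisfies f_i^- σ = (f_i^+ σ) ∘ T_j T_{j,m} with i < j < m, then all four faces f_j^- σ, f_j^+ σ, f_m^- σ, f_m^+ σ are non-injective on vertices. -/

import Mathlib

/-- The discrete `n`-cube graph on `{0,1}^n`: two vertices are adjacent iff they
differ in exactly one coordinate. -/
def Cube (n : ℕ) : SimpleGraph (Fin n → Bool) where
  Adj x y := ∃! i, x i ≠ y i
  symm := ⟨by
    rintro x y ⟨i, hi, hu⟩
    exact ⟨i, hi.symm, fun j hj => hu j hj.symm⟩⟩
  loopless := ⟨by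
    rintro x ⟨i, hi, -⟩
    exact hi rfl⟩

/-- A graph map sends each edge to an edge or to a vertex. -/
def IsGraphMap {V W : Type*} (G : SimpleGraph V) (H : SimpleGraph W) (f : V → W) : Prop :=
  ∀ ⦃u v⦄, G.Adj u v → H.Adj (f u) (f v) ∨ f u = f v

/-- The face of a singular cube obtained by fixing the `i`-th coordinate to `b`
(`b = false` gives the front face `f_i^-`, `b = true` the back face `f_i^+`). -/
def face {V : Type*} {n : ℕ} (i : Fin (n + 1)) (b : Bool)
    (σ : (Fin (n + 1) → Bool) → V) : (Fin n → Bool) → V :=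
  fun t => σ (i.insertNth b t)

/-- The reflection `T_i` of the discrete cube, flipping the `i`-th coordinate. -/
def reflT {n : ℕ} (i : Fin n) (t : Fin n → Bool) : Fin n → Bool :=
  Function.update t i (!t i)

/-- The transposition `T_{i,j}` of the discrete cube, swapping coordinates `i` and `j`. -/
def swapT {n : ℕ} (i j : Fin n) (t : Fin n → Bool) : Fin n → Bool :=
  t ∘ Equiv.swap i j

/-- A singular cube is degenerate iff it does not depend on some coordinate,
equivalently some pair of opposite faces `f_i^- σ = f_i^+ σ` agree. -/
def IsDegenerate {V : Type*} {m : ℕ} (τ : (Fin m → Bool) → V) : Prop :=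
  ∃ i : Fin m, ∀ t, τ t = τ (reflT i t)

lemma coe_succAbove' (n : ℕ) (p : Fin (n+1)) (k : Fin n) :
    ((p.succAbove k : Fin (n+1)) : ℕ) = if (k:ℕ) < p then (k:ℕ) else k+1 := by
  rw [Fin.succAbove]
  split_ifs with h1 h2 h2 <;> simp_all [Fin.lt_def, Fin.castSucc]

lemma insertNth_apply' {n : ℕ} (p : Fin (n+1)) (b : Bool) (t : Fin n → Bool) (k : Fin (n+1)) :
    Fin.insertNth (α := fun _ => Bool) p b t k =
      if h1 : (k:ℕ) = (p:ℕ) then b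
      else if h2 : (k:ℕ) < (p:ℕ) then t ⟨k, by have := p.isLt; omega⟩
      else t ⟨(k:ℕ)-1, by have := k.isLt; omega⟩ := by
  by_cases hk : k = p
  · subst hk; simp
  · obtain ⟨k', rfl⟩ := Fin.exists_succAbove_eq hk
    rw [Fin.insertNth_apply_succAbove]
    have hc := coe_succAbove' n p k'
    have hne : ((p.succAbove k' : Fin (n+1)) : ℕ) ≠ (p:ℕ) := fun h => hk (Fin.ext h)
    split_ifs at hc ⊢ with h1 h2 h3 <;> try omega
    · congr 1; apply Fin.ext; simp only [Fin.val_mk]; omega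
    · congr 1; apply Fin.ext; simp only [Fin.val_mk]; omega

/-- if opposite faces of `σ` satisfy `f_i^- σ = (f_i^+ σ) ∘ T_j T_{j,m}`
for `i < j < m`, then the four faces `f_j^± σ` and `f_m^± σ` are non-injective. -/
theorem rotation_forces_noninjective_faces {V : Type*} (G : SimpleGraph V) {n : ℕ}
    (i j m : ℕ) (hij : i < j) (hjm : j < m) (hm : m < n + 3)
    (σ : (Fin (n + 3) → Bool) → V) (hσ : IsGraphMap (Cube (n + 3)) G σ)
    (hrot : face (⟨i, by omega⟩ : Fin (n + 3)) false σ =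
      (face (⟨i, by omega⟩ : Fin (n + 3)) true σ) ∘
        (fun t : Fin (n + 2) → Bool =>
          reflT (⟨j - 1, by omega⟩ : Fin (n + 2))
            (swapT (⟨j - 1, by omega⟩ : Fin (n + 2)) (⟨m - 1, by omega⟩ : Fin (n + 2)) t))) :
    ∀ c : Bool,
      ¬ Function.Injective (face (⟨j, by omega⟩ : Fin (n + 3)) c σ) ∧
      ¬ Function.Injective (face (⟨m, hm⟩ : Fin (n + 3)) c σ) := by
  intro c
  -- explicit points of the cube determined by coordinates `i`, `j`, `m`
  have E1 : ∀ c' a b : Bool, Fin.insertNth (α := fun _ => Bool) (⟨i, by omega⟩ : Fin (n+3)) c'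
      (fun k : Fin (n+2) => if (k:ℕ) = j-1 then a else if (k:ℕ) = m-1 then b else false)
      = fun k : Fin (n+3) =>
        if (k:ℕ) = i then c' else if (k:ℕ) = j then a else if (k:ℕ) = m then b else false := by
    intro c' a b; funext k
    rw [insertNth_apply']
    simp only [Fin.val_mk]
    split_ifs <;> first | rfl | omega
  have E2 : ∀ a b : Bool, reflT (⟨j-1, by omega⟩ : Fin (n+2))
      (swapT (⟨j-1, by omega⟩ : Fin (n+2)) (⟨m-1, by omega⟩ : Fin (n+2))
        (fun k : Fin (n+2) => if (k:ℕ) = j-1 then a else if (k:ℕ) = m-1 then b else false))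
      = fun k : Fin (n+2) => if (k:ℕ) = j-1 then !b else if (k:ℕ) = m-1 then a else false := by
    intro a b; funext k
    simp only [reflT, swapT, Function.update_apply, Function.comp_apply,
      Equiv.swap_apply_def, Fin.ext_iff, Fin.val_mk]
    split_ifs <;> simp only [Fin.val_mk] at * <;> first | rfl | omega | simp_all
  -- the key identification coming from the rotation hypothesis
  have hkey : ∀ a b : Bool,
      σ (fun k : Fin (n+3) =>
        if (k:ℕ) = i then false else if (k:ℕ) = j then a else if (k:ℕ) = m then b else false)
      = σ (fun k : Fin (n+3) =>
        if (k:ℕ) = i then true else if (k:ℕ) = j then !b else if (k:ℕ) = m then a else false) := by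
    intro a b
    have h := congrFun hrot
      (fun k : Fin (n+2) => if (k:ℕ) = j-1 then a else if (k:ℕ) = m-1 then b else false)
    simp only [Function.comp_apply, face] at h
    rw [E2 a b, E1 true (!b) a, E1 false a b] at h
    exact h
  have E3 : ∀ bi bm : Bool, Fin.insertNth (α := fun _ => Bool) (⟨j, by omega⟩ : Fin (n+3)) c
      (fun k : Fin (n+2) => if (k:ℕ) = i then bi else if (k:ℕ) = m-1 then bm else false)
      = fun k : Fin (n+3) =>
        if (k:ℕ) = i then bi else if (k:ℕ) = j then c else if (k:ℕ) = m then bm else false := by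
    intro bi bm; funext k
    rw [insertNth_apply']
    simp only [Fin.val_mk]
    split_ifs <;> first | rfl | omega
  have E4 : ∀ bi bj : Bool, Fin.insertNth (α := fun _ => Bool) (⟨m, hm⟩ : Fin (n+3)) c
      (fun k : Fin (n+2) => if (k:ℕ) = i then bi else if (k:ℕ) = j then bj else false)
      = fun k : Fin (n+3) =>
        if (k:ℕ) = i then bi else if (k:ℕ) = j then bj else if (k:ℕ) = m then c else false := by
    intro bi bj; funext k
    rw [insertNth_apply']
    simp only [Fin.val_mk]
    split_ifs <;> first | rfl | omega
  constructor
  · intro hinj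
    have heq : face (⟨j, by omega⟩ : Fin (n+3)) c σ
          (fun k : Fin (n+2) => if (k:ℕ) = i then false else if (k:ℕ) = m-1 then !c else false)
        = face (⟨j, by omega⟩ : Fin (n+3)) c σ
          (fun k : Fin (n+2) => if (k:ℕ) = i then true else if (k:ℕ) = m-1 then c else false) := by
      show σ _ = σ _
      rw [E3 false (!c), E3 true c]
      have h := hkey c (!c)
      simpa using h
    have := congrFun (hinj heq) ⟨i, by omega⟩
    simp at this
  · intro hinj
    have heq : face (⟨m, hm⟩ : Fin (n+3)) c σ
          (fun k : Fin (n+2) => if (k:ℕ) = i then false else if (k:ℕ) = j then c else false)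
        = face (⟨m, hm⟩ : Fin (n+3)) c σ
          (fun k : Fin (n+2) => if (k:ℕ) = i then true else if (k:ℕ) = j then !c else false) := by
      show σ _ = σ _
      rw [E4 false c, E4 true (!c)]
      exact hkey c c
    have := congrFun (hinj heq) ⟨i, by omega⟩
    simp at this
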